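/- Let n and k be positive integers with n = mk + j where m ≥ 1 and 0 ≤ j ≤ k - 1. Then the signed excedance enumerator over mod-k-alternating derangements satisfies ∑_{π ∈ MPD_{n,1}^k} sgn(π) · t^{exc(π)} = (-1)^n · (-t)^k · ([m]_t)^j · ([m-1]_t)^{k-j} as polynomials in ℚ[t]. -/

import Mathlib

open Polynomial Finset

/-- Number of excedances of a permutation of `Fin n` (indices where `π i > i`). -/
def exc {n : ℕ} (π : Equiv.Perm (Fin n)) : ℕ :=
  (Finset.univ.filter fun i => π i > i).card

/-- Mod-k-alternating permutations of size `n` starting with remainder `r` (mod k):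
permutations with `π i - i ≡ r - 1 (mod k)` for all `i`. -/
def MP (n k r : ℕ) : Finset (Equiv.Perm (Fin n)) :=
  Finset.univ.filter fun π => ∀ i : Fin n, ((π i : ℤ) - (i : ℤ)) ≡ ((r : ℤ) - 1) [ZMOD (k : ℤ)]

/-- Mod-k-alternating derangements: elements of `MP n k r` with no fixed point. -/
def MPD (n k r : ℕ) : Finset (Equiv.Perm (Fin n)) :=
  (MP n k r).filter fun π => ∀ i : Fin n, π i ≠ i

/-- The q-analogue `[m]_t = 1 + t + ⋯ + t^(m-1)` as a polynomial in `ℚ[X]`. -/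
noncomputable def qnat (m : ℕ) : ℚ[X] := ∑ i ∈ Finset.range m, X ^ i

set_option linter.unusedSectionVars false
set_option linter.unreachableTactic false
set_option linter.unusedTactic false

noncomputable section

def derSet (s : ℕ) : Finset (Equiv.Perm (Fin s)) := Finset.univ.filter fun σ => ∀ q, σ q ≠ q

def dpoly (s : ℕ) : ℚ[X] := ∑ σ ∈ derSet s, ((Equiv.Perm.sign σ : ℤ) : ℚ[X]) * X ^ exc σ

def rowLX (a b : ℕ) : ℚ[X] := if b + 1 = a then X else if b = a then -1 else 0

def M0 (s : ℕ) : Matrix (Fin s) (Fin s) ℚ[X] :=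
  Matrix.of fun a b => if a = b then 0 else if (b : ℕ) < (a : ℕ) then X else 1

def B0 (s : ℕ) : Matrix (Fin s) (Fin s) ℚ[X] :=
  Matrix.of fun a b => if (a : ℕ) = 0 then (if (b : ℕ) = 0 then 0 else 1) else rowLX a b

def C0 (s : ℕ) : Matrix (Fin s) (Fin s) ℚ[X] :=
  Matrix.of fun a b => if (a : ℕ) = 0 then 1 else rowLX a b

def D0 (s : ℕ) : Matrix (Fin s) (Fin s) ℚ[X] := Matrix.of fun a b => rowLX (a + 1) (b + 1)

lemma qnat_succ (t : ℕ) : qnat (t + 1) = 1 + X * qnat t := by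
  rw [qnat, qnat, Finset.sum_range_succ']
  simp [Finset.mul_sum, pow_succ, add_comm, mul_comm]

lemma detD0 (s : ℕ) : (D0 s).det = (-1) ^ s := by
  rw [Matrix.det_of_lowerTriangular (D0 s)]
  · simp [D0, rowLX]
  · intro a b h
    simp only [OrderDual.toDual_lt_toDual] at h
    simp only [D0, Matrix.of_apply, rowLX]
    rw [if_neg (by omega), if_neg (by omega)]

lemma succAbove_one_val {r : ℕ} (a : Fin (r + 1)) (h : 0 < (a : ℕ)) :
    ((Fin.succAbove 1 a : Fin (r + 2)) : ℕ) = (a : ℕ) + 1 := by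
  rw [Fin.succAbove]
  split
  · rename_i hlt
    have h1 := Fin.lt_iff_val_lt_val.mp hlt
    simp only [Fin.coe_castSucc, Fin.val_one] at h1
    omega
  · simp

lemma succAbove_one_zero {r : ℕ} :
    ((Fin.succAbove 1 (0 : Fin (r + 1)) : Fin (r + 2)) : ℕ) = 0 := by
  rw [Fin.succAbove]
  split
  · rfl
  · rename_i hlt
    exfalso; apply hlt
    simp [Fin.lt_iff_val_lt_val]

lemma C0_sub (r : ℕ) :
    (C0 (r + 2)).submatrix (Fin.succAbove 1) Fin.succ = C0 (r + 1) := by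
  ext a b
  simp only [Matrix.submatrix_apply, C0, Matrix.of_apply]
  rcases Nat.eq_zero_or_pos a.val with h | h
  · have ha : a = 0 := Fin.ext h
    subst ha
    rw [succAbove_one_zero]
    simp
  · rw [succAbove_one_val a h]
    rw [if_neg (by omega), if_neg (by omega)]
    simp only [rowLX, Fin.val_succ, Nat.add_right_cancel_iff]

lemma C0_sub0 (r : ℕ) :
    (C0 (r + 2)).submatrix (Fin.succAbove 0) Fin.succ = D0 (r + 1) := by
  ext a b
  simp only [Matrix.submatrix_apply, C0, D0, Matrix.of_apply, Fin.succAbove_zero,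
    Function.comp_apply, Fin.val_succ]
  rw [if_neg (by omega)]

lemma detC0 (r : ℕ) : (C0 (r + 1)).det = (-1) ^ r * qnat (r + 1) := by
  induction r with
  | zero => simp [Matrix.det_fin_one, C0, qnat]
  | succ r ih =>
    rw [Matrix.det_succ_column_zero, Fin.sum_univ_succ, Fin.sum_univ_succ]
    have hrest : ∀ i : Fin r,
        (-1 : ℚ[X]) ^ (((i.succ.succ : Fin (r+2))) : ℕ) * (C0 (r+2)) i.succ.succ 0 *
          ((C0 (r+2)).submatrix (Fin.succAbove i.succ.succ) Fin.succ).det = 0 := by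
      intro i
      have hz : (C0 (r+2)) i.succ.succ 0 = 0 := by
        simp only [C0, Matrix.of_apply, Fin.val_succ, rowLX, Fin.val_zero]
        simp
      rw [hz]; ring
    rw [Finset.sum_eq_zero (fun i _ => hrest i), Fin.succ_zero_eq_one]
    have h00 : (C0 (r+2)) 0 0 = 1 := by simp [C0]
    have h10 : (C0 (r+2)) 1 0 = X := by
      simp only [C0, Matrix.of_apply, Fin.val_one, Fin.val_zero, rowLX]
      norm_num
    rw [h00, h10, C0_sub, C0_sub0, ih, detD0]
    rw [show ((0 : Fin (r+2)) : ℕ) = 0 from rfl, show ((1 : Fin (r+2)) : ℕ) = 1 from rfl,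
      qnat_succ (r+1)]
    ring

end

noncomputable section

lemma B0_sub (r : ℕ) :
    (B0 (r + 2)).submatrix (Fin.succAbove 1) Fin.succ = C0 (r + 1) := by
  ext a b
  simp only [Matrix.submatrix_apply, B0, C0, Matrix.of_apply]
  rcases Nat.eq_zero_or_pos a.val with h | h
  · have ha : a = 0 := Fin.ext h
    subst ha
    rw [succAbove_one_zero]
    simp [Fin.val_succ]
  · rw [succAbove_one_val a h]
    rw [if_neg (by omega), if_neg (by omega)]
    simp only [rowLX, Fin.val_succ, Nat.add_right_cancel_iff]

lemma detB0 (r : ℕ) : (B0 (r + 1)).det = (-1) ^ r * X * qnat r := by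
  cases r with
  | zero =>
    have : (B0 1) 0 0 = 0 := by simp [B0]
    rw [Matrix.det_fin_one, this]
    simp [qnat]
  | succ r =>
    rw [Matrix.det_succ_column_zero, Fin.sum_univ_succ, Fin.sum_univ_succ]
    have hrest : ∀ i : Fin r,
        (-1 : ℚ[X]) ^ (((i.succ.succ : Fin (r+2))) : ℕ) * (B0 (r+2)) i.succ.succ 0 *
          ((B0 (r+2)).submatrix (Fin.succAbove i.succ.succ) Fin.succ).det = 0 := by
      intro i
      have hz : (B0 (r+2)) i.succ.succ 0 = 0 := by
        simp only [B0, Matrix.of_apply, Fin.val_succ, rowLX, Fin.val_zero]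
        simp
      rw [hz]; ring
    rw [Finset.sum_eq_zero (fun i _ => hrest i), Fin.succ_zero_eq_one]
    have h00 : (B0 (r+2)) 0 0 = 0 := by simp [B0]
    have h10 : (B0 (r+2)) 1 0 = X := by
      simp only [B0, Matrix.of_apply, Fin.val_one, Fin.val_zero, rowLX]
      norm_num
    rw [h00, h10, B0_sub, detC0]
    rw [show ((1 : Fin (r+2)) : ℕ) = 1 from rfl]
    ring

lemma detM0_eq (r : ℕ) : (M0 (r + 1)).det = (B0 (r + 1)).det := by
  apply Matrix.det_eq_of_forall_row_eq_smul_add_pred (fun _ => (1 : ℚ[X]))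
  · intro j
    simp only [M0, B0, Matrix.of_apply, rowLX, Fin.ext_iff, Fin.val_zero]
    split_ifs <;> simp_all <;> rintro rfl <;> simp_all
  · intro i j
    simp only [M0, B0, Matrix.of_apply, one_mul, rowLX, Fin.val_succ,
      Fin.coe_castSucc, Fin.ext_iff]
    split_ifs <;> first | rfl | omega | exact absurd ‹False› (not_false) | ring

lemma smul_units (u : ℤˣ) (p : ℚ[X]) : u • p = ((u : ℤ) : ℚ[X]) * p := by
  rw [Units.smul_def, zsmul_eq_mul]

lemma dpoly_eq_det (s : ℕ) : dpoly s = (M0 s).det := by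
  rw [Matrix.det_apply, ← Finset.sum_filter_add_sum_filter_not Finset.univ
    (fun σ : Equiv.Perm (Fin s) => ∀ q, σ q ≠ q)]
  have h2 : ∑ σ ∈ Finset.univ.filter (fun σ : Equiv.Perm (Fin s) => ¬ ∀ q, σ q ≠ q),
      Equiv.Perm.sign σ • ∏ i, (M0 s) (σ i) i = 0 := by
    apply Finset.sum_eq_zero
    intro σ hσ
    rw [Finset.mem_filter] at hσ
    push_neg at hσ
    obtain ⟨q, hq⟩ := hσ.2
    have : ∏ i, (M0 s) (σ i) i = 0 := by
      apply Finset.prod_eq_zero (Finset.mem_univ q)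
      simp [M0, hq]
    rw [this, smul_zero]
  rw [h2, add_zero, dpoly, derSet]
  apply Finset.sum_congr rfl
  intro σ hσ
  rw [Finset.mem_filter] at hσ
  have hprod : ∏ i : Fin s, (M0 s) (σ i) i
      = ∏ i : Fin s, (if (i : ℕ) < (σ i : ℕ) then X else 1) := by
    apply Finset.prod_congr rfl
    intro i _
    simp only [M0, Matrix.of_apply]
    rw [if_neg (hσ.2 i)]
  rw [smul_units, hprod, Finset.prod_ite, Finset.prod_const, Finset.prod_const_one, mul_one,
    exc]
  have hfe : (Finset.univ.filter fun i : Fin s => σ i > i)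
      = Finset.univ.filter (fun i : Fin s => (i : ℕ) < (σ i : ℕ)) := by
    apply Finset.filter_congr
    intro i _
    exact Fin.lt_def
  rw [hfe]

lemma dpoly_eq (s : ℕ) : dpoly (s + 1) = (-1) ^ s * X * qnat s := by
  rw [dpoly_eq_det, detM0_eq, detB0]

end

def csz (n k c : ℕ) : ℕ := (n - 1 - c) / k + 1

variable {n k : ℕ}

lemma div_lt_csz (hk : 0 < k) {i : ℕ} (hi : i < n) : i / k < csz n k (i % k) := by
  have hd : k * (i / k) + i % k = i := Nat.div_add_mod i k
  apply Nat.lt_succ_of_le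
  rw [Nat.le_div_iff_mul_le hk]
  have h1 : i / k * k = k * (i / k) := Nat.mul_comm _ _
  omega

lemma q_mul_lt (hk : 0 < k) (hkn : k ≤ n) {c q : ℕ} (hc : c < k) (hq : q < csz n k c) :
    q * k + c < n := by
  have h1 : q ≤ (n - 1 - c) / k := Nat.lt_succ_iff.mp hq
  have h2 : q * k ≤ n - 1 - c := (Nat.le_div_iff_mul_le hk).mp h1
  omega

lemma mul_add_mod_eq {c q : ℕ} (hc : c < k) : (q * k + c) % k = c := by
  rw [Nat.mul_comm, Nat.mul_add_mod, Nat.mod_eq_of_lt hc]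

lemma mul_add_div_eq (hk : 0 < k) {c q : ℕ} (hc : c < k) : (q * k + c) / k = q := by
  rw [Nat.mul_comm, Nat.mul_add_div hk, Nat.div_eq_of_lt hc, Nat.add_zero]

def EE (hk : 0 < k) (hkn : k ≤ n) : Fin n ≃ Σ c : Fin k, Fin (csz n k c.val) where
  toFun i := ⟨⟨i.val % k, Nat.mod_lt _ hk⟩, ⟨i.val / k, div_lt_csz hk i.isLt⟩⟩
  invFun x := ⟨x.2.val * k + x.1.val, q_mul_lt hk hkn x.1.isLt x.2.isLt⟩
  left_inv i := Fin.ext (Nat.div_add_mod' i.val k)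
  right_inv x := by
    rcases x with ⟨c, q⟩
    have hm : (q.val * k + c.val) % k = c.val := mul_add_mod_eq c.isLt
    have hdv : (q.val * k + c.val) / k = q.val := mul_add_div_eq hk c.isLt
    dsimp only
    apply Sigma.ext
    · exact Fin.ext hm
    · exact (Fin.heq_ext_iff (congrArg (csz n k) hm)).mpr hdv

section SignSigma

variable {ι : Type*} [Fintype ι] [DecidableEq ι] (β : ι → Type*)
  [∀ i, Fintype (β i)] [∀ i, DecidableEq (β i)]

def sigmaSub (i : ι) : β i ≃ {x : Σ j, β j // x.1 = i} where
  toFun y := ⟨⟨i, y⟩, rfl⟩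
  invFun x := x.2 ▸ x.1.2
  left_inv y := rfl
  right_inv x := by rcases x with ⟨⟨j, y⟩, h⟩; subst h; rfl

lemma single_eq (i : ι) (τ : Equiv.Perm (β i)) :
    Equiv.Perm.sigmaCongrRightHom β (Pi.mulSingle i τ) =
      τ.extendDomain (sigmaSub β i) := by
  apply Equiv.ext
  rintro ⟨j, y⟩
  by_cases h : j = i
  · subst h
    rw [Equiv.Perm.extendDomain_apply_subtype τ (sigmaSub β j) (b := ⟨j, y⟩) rfl]
    simp [Equiv.Perm.sigmaCongrRightHom, sigmaSub, Pi.mulSingle_eq_same,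
      Equiv.Perm.sigmaCongrRight]
  · rw [Equiv.Perm.extendDomain_apply_not_subtype τ (sigmaSub β i) (b := ⟨j, y⟩) (by simpa using h)]
    simp [Equiv.Perm.sigmaCongrRightHom, Pi.mulSingle_eq_of_ne h,
      Equiv.Perm.sigmaCongrRight]

lemma sign_sigma (σ : ∀ i, Equiv.Perm (β i)) :
    Equiv.Perm.sign (Equiv.Perm.sigmaCongrRightHom β σ) = ∏ i, Equiv.Perm.sign (σ i) := by
  conv_lhs => rw [← Finset.noncommProd_mulSingle σ]
  erw [Finset.map_noncommProd, Finset.map_noncommProd, Finset.noncommProd_eq_prod]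
  exact Finset.prod_congr rfl fun i _ => by
    rw [single_eq, Equiv.Perm.sign_extendDomain]

end SignSigma

def Phi (hk : 0 < k) (hkn : k ≤ n) (σ : ∀ c : Fin k, Equiv.Perm (Fin (csz n k c.val))) :
    Equiv.Perm (Fin n) :=
  (EE hk hkn).symm.permCongr (Equiv.Perm.sigmaCongrRightHom _ σ)

lemma EE_symm_val (hk : 0 < k) (hkn : k ≤ n) (x : Σ c : Fin k, Fin (csz n k c.val)) :
    (((EE hk hkn).symm x : Fin n) : ℕ) = x.2.val * k + x.1.val := rfl

lemma Phi_apply (hk : 0 < k) (hkn : k ≤ n) (σ : ∀ c : Fin k, Equiv.Perm (Fin (csz n k c.val)))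
    (x : Σ c : Fin k, Fin (csz n k c.val)) :
    Phi hk hkn σ ((EE hk hkn).symm x) = (EE hk hkn).symm ⟨x.1, σ x.1 x.2⟩ := by
  rcases x with ⟨c, q⟩
  simp [Phi, Equiv.permCongr_apply, Equiv.Perm.sigmaCongrRightHom,
    Equiv.Perm.sigmaCongrRight]

lemma sign_Phi (hk : 0 < k) (hkn : k ≤ n) (σ : ∀ c : Fin k, Equiv.Perm (Fin (csz n k c.val))) :
    Equiv.Perm.sign (Phi hk hkn σ) = ∏ c : Fin k, Equiv.Perm.sign (σ c) := by
  rw [Phi, Equiv.Perm.sign_permCongr, sign_sigma]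

lemma exc_Phi (hk : 0 < k) (hkn : k ≤ n) (σ : ∀ c : Fin k, Equiv.Perm (Fin (csz n k c.val))) :
    exc (Phi hk hkn σ) = ∑ c : Fin k, exc (σ c) := by
  have key : ∀ x : Σ c : Fin k, Fin (csz n k c.val),
      ((EE hk hkn).symm x < Phi hk hkn σ ((EE hk hkn).symm x)) ↔ x.2 < σ x.1 x.2 := by
    intro x
    rw [Phi_apply, Fin.lt_def, Fin.lt_def, EE_symm_val, EE_symm_val]
    exact (Nat.add_lt_add_iff_right).trans (Nat.mul_lt_mul_right hk)
  have hT : (Finset.univ.filter fun i => Phi hk hkn σ i > i).card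
      = (Finset.univ.sigma fun c : Fin k =>
          Finset.univ.filter fun q : Fin (csz n k c.val) => σ c q > q).card := by
    apply Finset.card_bij (fun (i : Fin n) _ => EE hk hkn i)
    · intro i hi
      rw [Finset.mem_filter] at hi
      rw [Finset.mem_sigma, Finset.mem_filter]
      refine ⟨Finset.mem_univ _, Finset.mem_univ _, ?_⟩
      exact (key (EE hk hkn i)).mp (by rw [Equiv.symm_apply_apply]; exact hi.2)
    · intro a _ b _ hab
      exact (EE hk hkn).injective hab
    · intro x hx
      rw [Finset.mem_sigma, Finset.mem_filter] at hx
      refine ⟨(EE hk hkn).symm x, ?_, (EE hk hkn).apply_symm_apply x⟩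
      rw [Finset.mem_filter]
      exact ⟨Finset.mem_univ _, (key x).mpr hx.2.2⟩
  rw [exc, hT, Finset.card_sigma]
  rfl

lemma Phi_mem_MP (hk : 0 < k) (hkn : k ≤ n) (σ : ∀ c : Fin k, Equiv.Perm (Fin (csz n k c.val))) :
    Phi hk hkn σ ∈ MP n k 1 := by
  rw [MP, Finset.mem_filter]
  refine ⟨Finset.mem_univ _, fun i => ?_⟩
  obtain ⟨x, rfl⟩ : ∃ x, (EE hk hkn).symm x = i := ⟨EE hk hkn i, (EE hk hkn).symm_apply_apply i⟩
  rw [Phi_apply]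
  have h1 : ((((EE hk hkn).symm ⟨x.1, σ x.1 x.2⟩ : Fin n) : ℕ) : ℤ)
      - ((((EE hk hkn).symm x : Fin n) : ℕ) : ℤ)
      = ((σ x.1 x.2 : ℕ) - (x.2 : ℕ) : ℤ) * k := by
    rw [EE_symm_val, EE_symm_val]
    push_cast
    ring
  rw [h1]
  simp only [Nat.cast_one, sub_self]
  exact Int.modEq_zero_iff_dvd.mpr (Dvd.intro_left _ rfl)

lemma Phi_inj (hk : 0 < k) (hkn : k ≤ n) : Function.Injective (Phi hk hkn) := by
  intro σ σ' h
  have h2 := ((EE hk hkn).symm.permCongr).injective h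
  exact Equiv.Perm.sigmaCongrRightHom_injective h2

lemma Phi_der (hk : 0 < k) (hkn : k ≤ n) (σ : ∀ c : Fin k, Equiv.Perm (Fin (csz n k c.val)))
    (hσ : ∀ c q, σ c q ≠ q) : ∀ i, Phi hk hkn σ i ≠ i := by
  intro i hi
  obtain ⟨x, rfl⟩ : ∃ x, (EE hk hkn).symm x = i := ⟨EE hk hkn i, (EE hk hkn).symm_apply_apply i⟩
  rw [Phi_apply] at hi
  have := (EE hk hkn).symm.injective hi
  rcases x with ⟨c, q⟩
  have h5 : σ c q = q := by simpa using this
  exact hσ c q h5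

lemma sum_MPD (hk : 0 < k) (hkn : k ≤ n) (F : Equiv.Perm (Fin n) → ℚ[X]) :
    ∑ π ∈ MPD n k 1, F π
      = ∑ σ ∈ Fintype.piFinset (fun c : Fin k => derSet (csz n k c.val)),
          F (Phi hk hkn σ) := by
  apply (Finset.sum_bij (fun σ _ => Phi hk hkn σ) ?_ ?_ ?_ ?_).symm
  · -- maps into MPD
    intro σ hσ
    rw [Fintype.mem_piFinset] at hσ
    rw [MPD, Finset.mem_filter]
    refine ⟨Phi_mem_MP hk hkn σ, Phi_der hk hkn σ fun c q => ?_⟩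
    have := hσ c
    rw [derSet, Finset.mem_filter] at this
    exact this.2 q
  · intro a _ b _ h
    exact Phi_inj hk hkn h
  · -- surjective
    intro π hπ
    rw [MPD, Finset.mem_filter] at hπ
    obtain ⟨hMP, hder⟩ := hπ
    rw [MP, Finset.mem_filter] at hMP
    have hmod : ∀ i : Fin n, (π i).val % k = i.val % k := by
      intro i
      have h := hMP.2 i
      have h0 : ((π i : Fin n) : ℤ) ≡ ((i : Fin n) : ℤ) [ZMOD (k : ℤ)] := by
        have h1 : ((1 : ℕ) : ℤ) - 1 = 0 := by norm_num
        rw [h1] at h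
        have hdvd := Int.modEq_zero_iff_dvd.mp h
        have h2 : (k : ℤ) ∣ ((i : Fin n) : ℤ) - ((π i : Fin n) : ℤ) := by
          rw [show ((i : Fin n) : ℤ) - ((π i : Fin n) : ℤ)
              = -(((π i : Fin n) : ℤ) - ((i : Fin n) : ℤ)) by ring]
          exact dvd_neg.mpr hdvd
        exact Int.modEq_iff_dvd.mpr h2
      have h3 : (((π i).val % k : ℕ) : ℤ) = ((i.val % k : ℕ) : ℤ) := by
        rw [Int.natCast_mod, Int.natCast_mod]
        exact h0
      exact_mod_cast h3
    have hbound : ∀ (c : Fin k) (q : Fin (csz n k c.val)),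
        (π ((EE hk hkn).symm ⟨c, q⟩)).val / k < csz n k c.val := by
      intro c q
      have h1 := div_lt_csz (n := n) hk (π ((EE hk hkn).symm ⟨c, q⟩)).isLt
      rwa [hmod, EE_symm_val, mul_add_mod_eq c.isLt] at h1
    have hval : ∀ (c : Fin k) (q : Fin (csz n k c.val)),
        π ((EE hk hkn).symm ⟨c, q⟩)
          = (EE hk hkn).symm ⟨c, ⟨_, hbound c q⟩⟩ := by
      intro c q
      apply Fin.ext
      rw [EE_symm_val]
      have h2 : (π ((EE hk hkn).symm ⟨c, q⟩)).val % k = c.val := by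
        rw [hmod, EE_symm_val, mul_add_mod_eq c.isLt]
      dsimp only
      rw [← h2]
      exact (Nat.div_add_mod' _ _).symm
    have hinj : ∀ c : Fin k, Function.Injective
        (fun q : Fin (csz n k c.val) => (⟨_, hbound c q⟩ : Fin (csz n k c.val))) := by
      intro c q1 q2 h
      have hv : (π ((EE hk hkn).symm ⟨c, q1⟩)).val / k
          = (π ((EE hk hkn).symm ⟨c, q2⟩)).val / k := congrArg Fin.val h
      have hm1 : (π ((EE hk hkn).symm ⟨c, q1⟩)).val % k = c.val := by
        rw [hmod, EE_symm_val, mul_add_mod_eq c.isLt]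
      have hm2 : (π ((EE hk hkn).symm ⟨c, q2⟩)).val % k = c.val := by
        rw [hmod, EE_symm_val, mul_add_mod_eq c.isLt]
      have hvals : (π ((EE hk hkn).symm ⟨c, q1⟩)).val
          = (π ((EE hk hkn).symm ⟨c, q2⟩)).val := by
        calc (π ((EE hk hkn).symm ⟨c, q1⟩)).val
            = (π ((EE hk hkn).symm ⟨c, q1⟩)).val / k * k
              + (π ((EE hk hkn).symm ⟨c, q1⟩)).val % k := (Nat.div_add_mod' _ _).symm
          _ = (π ((EE hk hkn).symm ⟨c, q2⟩)).val / k * k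
              + (π ((EE hk hkn).symm ⟨c, q2⟩)).val % k := by rw [hv, hm1, hm2]
          _ = (π ((EE hk hkn).symm ⟨c, q2⟩)).val := Nat.div_add_mod' _ _
      have h4 := (EE hk hkn).symm.injective (π.injective (Fin.ext hvals))
      simpa using h4
    refine ⟨fun c => Equiv.ofBijective _ (Finite.injective_iff_bijective.mp (hinj c)), ?_, ?_⟩
    · rw [Fintype.mem_piFinset]
      intro c
      rw [derSet, Finset.mem_filter]
      refine ⟨Finset.mem_univ _, fun q hq => ?_⟩
      have hfq : (⟨_, hbound c q⟩ : Fin (csz n k c.val)) = q := hq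
      have : π ((EE hk hkn).symm ⟨c, q⟩) = (EE hk hkn).symm ⟨c, q⟩ := by
        rw [hval c q, hfq]
      exact hder _ this
    · apply Equiv.ext
      intro i
      obtain ⟨x, rfl⟩ : ∃ x, (EE hk hkn).symm x = i :=
        ⟨EE hk hkn i, (EE hk hkn).symm_apply_apply i⟩
      rw [Phi_apply]
      rcases x with ⟨c, q⟩
      exact (hval c q).symm
  · intro σ _
    rfl


theorem stmt3 (n k m j : ℕ) (hn : 0 < n) (hk : 0 < k) (hm : 1 ≤ m)
    (hj : j ≤ k - 1) (hmj : n = m * k + j) :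
    ∑ π ∈ MPD n k 1, ((Equiv.Perm.sign π : ℤ) : ℚ[X]) * X ^ exc π
      = (-1) ^ n * (-X) ^ k * (qnat m) ^ j * (qnat (m - 1)) ^ (k - j) := by
  have hjk : j < k := by omega
  have hkn : k ≤ n := by
    have h1 : 1 * k ≤ m * k := Nat.mul_le_mul_right k hm
    omega
  rw [sum_MPD hk hkn]
  have hterm : ∀ σ ∈ Fintype.piFinset (fun c : Fin k => derSet (csz n k c.val)),
      ((Equiv.Perm.sign (Phi hk hkn σ) : ℤ) : ℚ[X]) * X ^ exc (Phi hk hkn σ)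
        = ∏ c : Fin k, (((Equiv.Perm.sign (σ c) : ℤ) : ℚ[X]) * X ^ exc (σ c)) := by
    intro σ _
    rw [sign_Phi, exc_Phi, Finset.prod_mul_distrib, ← Finset.prod_pow_eq_pow_sum]
    congr 1
    rw [← Int.cast_prod]
    congr 1
    exact map_prod (Units.coeHom ℤ) _ _
  rw [Finset.sum_congr rfl hterm, ← Finset.prod_univ_sum
    (fun c : Fin k => derSet (csz n k c.val))
    (fun c τ => ((Equiv.Perm.sign τ : ℤ) : ℚ[X]) * X ^ exc τ)]
  have hcsz : ∀ c : Fin k, csz n k c.val = if c.val < j then m + 1 else m := by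
    intro c
    by_cases hc : c.val < j
    · rw [if_pos hc, csz]
      have he : n - 1 - c.val = k * m + (j - 1 - c.val) := by
        have h2 : m * k = k * m := Nat.mul_comm m k
        omega
      rw [he, Nat.mul_add_div hk, Nat.div_eq_of_lt (by omega)]
    · rw [if_neg hc, csz]
      have he : n - 1 - c.val = k * (m - 1) + (k + j - 1 - c.val) := by
        have h2 : m * k = k * m := Nat.mul_comm m k
        have h3 : k * (m - 1) = k * m - k := by
          cases m with
          | zero => omega
          | succ m' => simp [Nat.mul_succ]
        have h4 : k ≤ k * m := Nat.le_mul_of_pos_right k hm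
        omega
      rw [he, Nat.mul_add_div hk, Nat.div_eq_of_lt (by omega)]
      omega
  have hval : ∀ c : Fin k,
      (∑ τ ∈ derSet (csz n k c.val), ((Equiv.Perm.sign τ : ℤ) : ℚ[X]) * X ^ exc τ)
        = if c.val < j then (-1) ^ m * X * qnat m else (-1) ^ (m - 1) * X * qnat (m - 1) := by
    intro c
    have h1 : (∑ τ ∈ derSet (csz n k c.val), ((Equiv.Perm.sign τ : ℤ) : ℚ[X]) * X ^ exc τ)
        = dpoly (csz n k c.val) := rfl
    rw [h1, hcsz c]
    split_ifs with hc
    · exact dpoly_eq m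
    · rw [congrArg dpoly (show m = (m - 1) + 1 by omega)]
      exact dpoly_eq (m - 1)
  rw [Finset.prod_congr rfl (fun c _ => hval c), Finset.prod_ite, Finset.prod_const,
    Finset.prod_const]
  have hcard1 : (Finset.univ.filter fun c : Fin k => c.val < j).card = j := by
    refine (Finset.card_bij (fun (c : Fin k)
      (hc : c ∈ Finset.univ.filter fun c : Fin k => c.val < j)
      => (⟨c.val, (Finset.mem_filter.mp hc).2⟩ : Fin j)) ?_ ?_ ?_).trans (Finset.card_fin j)
    · intro a ha
      exact Finset.mem_univ _
    · intro a ha b hb hab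
      have h2 := hab
      simp only [Fin.mk.injEq] at h2
      exact Fin.ext h2
    · intro b _
      refine ⟨⟨b.val, lt_trans b.isLt hjk⟩, ?_, rfl⟩
      rw [Finset.mem_filter]
      exact ⟨Finset.mem_univ _, b.isLt⟩
  have hcard2 : (Finset.univ.filter fun c : Fin k => ¬ c.val < j).card = k - j := by
    have h := Finset.card_filter_add_card_filter_not
      (s := (Finset.univ : Finset (Fin k))) (p := fun c : Fin k => c.val < j)
    rw [hcard1, Finset.card_univ, Fintype.card_fin] at h
    omega
  rw [hcard1, hcard2]
  have hE : m * j + (m - 1) * (k - j) + k = n := by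
    obtain ⟨m', rfl⟩ : ∃ m', m = m' + 1 := ⟨m - 1, by omega⟩
    obtain ⟨d, hd⟩ : ∃ d, k = j + d := ⟨k - j, by omega⟩
    subst hd
    rw [hmj]
    simp only [Nat.add_sub_cancel_left, Nat.add_sub_cancel]
    ring
  have h2 : (X : ℚ[X]) ^ j * X ^ (k - j) = X ^ k := by
    rw [← pow_add]
    congr 1
    omega
  have key : ((-1 : ℚ[X])) ^ (m * j) * (X : ℚ[X]) ^ j
      * ((-1 : ℚ[X]) ^ ((m - 1) * (k - j)) * X ^ (k - j)) = (-1) ^ n * (-X) ^ k := by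
    rw [show (-X : ℚ[X]) = (-1) * X from (neg_one_mul (X : ℚ[X])).symm, mul_pow]
    have h3 : (-1 : ℚ[X]) ^ n * (-1) ^ k = (-1) ^ (m * j + (m - 1) * (k - j)) := by
      rw [← pow_add, show n + k = (m * j + (m - 1) * (k - j)) + 2 * k by omega,
        pow_add, pow_mul]
      norm_num
    calc (-1 : ℚ[X]) ^ (m * j) * X ^ j * ((-1) ^ ((m - 1) * (k - j)) * X ^ (k - j))
        = ((-1 : ℚ[X]) ^ (m * j) * (-1) ^ ((m - 1) * (k - j))) * (X ^ j * X ^ (k - j)) := by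
          ring
      _ = (-1 : ℚ[X]) ^ (m * j + (m - 1) * (k - j)) * X ^ k := by rw [← pow_add, h2]
      _ = (-1 : ℚ[X]) ^ n * ((-1) ^ k * X ^ k) := by rw [← mul_assoc, ← h3]
  calc ((-1 : ℚ[X]) ^ m * X * qnat m) ^ j * ((-1) ^ (m - 1) * X * qnat (m - 1)) ^ (k - j)
      = ((-1 : ℚ[X]) ^ (m * j) * X ^ j * ((-1) ^ ((m - 1) * (k - j)) * X ^ (k - j)))
          * (qnat m ^ j * qnat (m - 1) ^ (k - j)) := by
        rw [mul_pow, mul_pow, mul_pow, mul_pow, ← pow_mul, ← pow_mul]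
        ring
    _ = ((-1 : ℚ[X]) ^ n * (-X) ^ k) * (qnat m ^ j * qnat (m - 1) ^ (k - j)) := by rw [key]
    _ = (-1) ^ n * (-X) ^ k * qnat m ^ j * qnat (m - 1) ^ (k - j) := by ring
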